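/- DDSketch relative error bound: let α ∈ (0,1) and γ = (1+α)/(1-α). For any real x > 0, let j = ⌈log_γ x⌉ be the bucket index, and let the bucket representative be x̂ = 2γ^j/(γ+1). Then |x̂ - x| ≤ α x. -/

import Mathlib

theorem ddsketch_relative_error
    (α : ℝ) (hα : α ∈ Set.Ioo (0 : ℝ) 1) (x : ℝ) (hx : 0 < x) :
    let γ : ℝ := (1 + α) / (1 - α)
    let j : ℤ := ⌈Real.logb γ x⌉
    let xhat : ℝ := 2 * γ ^ j / (γ + 1)
    |xhat - x| ≤ α * x := by
  obtain ⟨hα0, hα1⟩ := hα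
  intro γ j xhat
  have h1α : 0 < 1 - α := by linarith
  have hγ1 : 1 < γ := by
    rw [lt_div_iff₀ h1α]; linarith
  have hγ0 : 0 < γ := by linarith
  -- x ≤ γ^j
  have hub : x ≤ γ ^ j := by
    have h := Int.le_ceil (Real.logb γ x)
    calc x = γ ^ Real.logb γ x := (Real.rpow_logb hγ0 (ne_of_gt hγ1).symm.symm hx).symm
    _ ≤ γ ^ ((j : ℝ)) := Real.rpow_le_rpow_of_exponent_le (le_of_lt hγ1) h
    _ = γ ^ j := by rw [Real.rpow_intCast]
  -- γ^(j-1) < x, hence γ^j < γ * x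
  have hlb : γ ^ (j - 1) < x := by
    have h : ((j : ℝ)) - 1 < Real.logb γ x := by
      have := Int.ceil_lt_add_one (Real.logb γ x)
      push_cast at this ⊢
      linarith
    calc γ ^ (j - 1) = γ ^ (((j : ℝ)) - 1) := by
          rw [← Real.rpow_intCast]; push_cast; ring_nf
      _ < γ ^ Real.logb γ x := Real.rpow_lt_rpow_of_exponent_lt hγ1 h
      _ = x := Real.rpow_logb hγ0 (ne_of_gt hγ1).symm.symm hx
  have hlb' : γ ^ j < γ * x := by
    have : γ ^ j = γ * γ ^ (j - 1) := by
      rw [mul_comm, ← zpow_add_one₀ (ne_of_gt hγ0)]; ring_nf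
    rw [this]
    exact (mul_lt_mul_iff_right₀ hγ0).mpr hlb
  have hγp1 : 0 < γ + 1 := by linarith
  rw [abs_sub_le_iff]
  constructor
  · show 2 * γ ^ j / (γ + 1) - x ≤ α * x
    rw [div_sub' (ne_of_gt hγp1), div_le_iff₀ hγp1]
    have hγ : γ = (1 + α) / (1 - α) := rfl
    have hγeq : γ * (1 - α) = 1 + α := by
      rw [hγ]; field_simp
    nlinarith [hlb', hub]
  · show x - 2 * γ ^ j / (γ + 1) ≤ α * x
    rw [sub_div' (ne_of_gt hγp1), div_le_iff₀ hγp1]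
    have hγeq : γ * (1 - α) = 1 + α := by
      show ((1 + α) / (1 - α)) * (1 - α) = 1 + α
      field_simp
    nlinarith [hub, hx]
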